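/- Let I = (c, c+τ) and let e : I → ℝ be a continuous nondecreasing nonnegative function satisfying e(t) ≤ e₀ + α·e(t)^{1/2} + β·e(t) + γ·e(t)^{3/2} for all t ∈ I, where e₀ = limsup_{t→c⁺} e(t) and α, β, γ > 0. Suppose β < 1/2 and αγ < 1/16. If e₀ = 0, then limsup_{t→(c+τ)⁻} e(t) < 16α². -/
import Mathlib


open Set Filter

set_option maxHeartbeats 1000000 in
/-- Lemma 3.7 (i): if the initial local energy limit is zero, the energy stays below `16 α²`. -/
theorem stmt_2 (c τ α β γ : ℝ) (hτ : 0 < τ) (hα : 0 < α) (hβ : 0 < β) (hγ : 0 < γ)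
    (e : ℝ → ℝ)
    (hcont : ContinuousOn e (Ioo c (c + τ)))
    (hmono : MonotoneOn e (Ioo c (c + τ)))
    (hnonneg : ∀ t ∈ Ioo c (c + τ), 0 ≤ e t)
    (e₀ : ℝ) (he₀ : e₀ = Filter.limsup e (nhdsWithin c (Ioi c)))
    (hineq : ∀ t ∈ Ioo c (c + τ),
      e t ≤ e₀ + α * (e t) ^ ((1 : ℝ) / 2) + β * e t + γ * (e t) ^ ((3 : ℝ) / 2))
    (hβ2 : β < 1 / 2) (hαγ : α * γ < 1 / 16)
    (hzero : e₀ = 0) :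
    Filter.limsup e (nhdsWithin (c + τ) (Iio (c + τ))) < 16 * α ^ 2 := by
  subst hzero
  have h1β : (1:ℝ)/2 < 1 - β := by linarith
  have hDpos : 0 < (1-β)^2 - 4*(α*γ) := by nlinarith
  set s := Real.sqrt ((1-β)^2 - 4*(α*γ)) with hs
  have hs0 : 0 < s := Real.sqrt_pos.mpr hDpos
  have hs2 : s^2 = (1-β)^2 - 4*(α*γ) := Real.sq_sqrt hDpos.le
  have hslt : s < 1 - β := by nlinarith
  set xm : ℝ := ((1-β) - s)/(2*γ) with hxm
  set xp : ℝ := ((1-β) + s)/(2*γ) with hxp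
  have h2γ : 0 < 2*γ := by linarith
  have hxm0 : 0 < xm := div_pos (by linarith) h2γ
  have hxmp : xm < xp := by
    rw [hxm, hxp, div_lt_div_iff₀ h2γ h2γ]; nlinarith
  have hxm4α : xm < 4*α := by
    rw [hxm, div_lt_iff₀ h2γ]; nlinarith
  have hMlt : xm^2 < 16*α^2 := by nlinarith
  have hsq : xm^2 < xp^2 := by nlinarith
  -- Claim A : e avoids the interval (xm^2, xp^2)
  have claimA : ∀ t ∈ Ioo c (c+τ), e t ≤ xm^2 ∨ xp^2 ≤ e t := by
    intro t ht
    have hy0 : 0 ≤ e t := hnonneg t ht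
    set u := e t ^ ((1:ℝ)/2) with hu
    have hu0 : 0 ≤ u := Real.rpow_nonneg hy0 _
    have hu2 : u^2 = e t := by
      rw [hu, ← Real.rpow_natCast (e t ^ ((1:ℝ)/2)) 2, ← Real.rpow_mul hy0]
      norm_num
    have hu3 : e t ^ ((3:ℝ)/2) = u^3 := by
      rw [hu, ← Real.rpow_natCast (e t ^ ((1:ℝ)/2)) 3, ← Real.rpow_mul hy0]
      norm_num
    have hiq := hineq t ht
    rw [hu3, ← hu, ← hu2] at hiq
    -- hiq : u^2 ≤ 0 + α*u + β*u^2 + γ*u^3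
    by_cases hle : u ≤ xm
    · left; rw [← hu2]; nlinarith
    · push_neg at hle
      have hupos : 0 < u := lt_trans hxm0 hle
      right
      by_contra hlt
      push_neg at hlt
      have hup : u < xp := by nlinarith
      have hxmval : xm * (2*γ) = (1-β) - s := div_mul_cancel₀ _ (ne_of_gt h2γ)
      have hxpval : xp * (2*γ) = (1-β) + s := div_mul_cancel₀ _ (ne_of_gt h2γ)
      have h1 : (1-β) - s < 2*γ*u := by
        have := mul_lt_mul_of_pos_right hle h2γ
        linarith
      have h2 : 2*γ*u < (1-β) + s := by
        have := mul_lt_mul_of_pos_right hup h2γ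
        linarith
      nlinarith [mul_pos (by linarith : (0:ℝ) < 2*γ*u - ((1-β)-s))
        (by linarith : (0:ℝ) < ((1-β)+s) - 2*γ*u), mul_pos hupos hupos,
        mul_le_mul_of_nonneg_left hiq hupos.le]
  -- e tends to values below xm^2 near c
  have hmemIoo : Ioo c (c+τ) ∈ nhdsWithin c (Ioi c) :=
    Ioo_mem_nhdsGT_of_mem ⟨le_refl c, by linarith⟩
  have hbdd : IsBoundedUnder (· ≤ ·) (nhdsWithin c (Ioi c)) e := by
    refine ⟨e (c+τ/2), eventually_map.mpr ?_⟩
    have hmem : Ioo c (c+τ/2) ∈ nhdsWithin c (Ioi c) :=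
      Ioo_mem_nhdsGT_of_mem ⟨le_refl c, by linarith⟩
    filter_upwards [hmem] with t ht
    exact hmono ⟨ht.1, by linarith [ht.2]⟩ ⟨by linarith, by linarith⟩ ht.2.le
  have hlim0 : limsup e (nhdsWithin c (Ioi c)) < xm^2 := by
    rw [← he₀]; positivity
  have hev : ∀ᶠ t in nhdsWithin c (Ioi c), e t < xm^2 :=
    eventually_lt_of_limsup_lt hlim0 hbdd
  obtain ⟨t₀, ht₀lt, ht₀I⟩ :=
    (hev.and (eventually_of_mem hmemIoo (fun t ht => ht))).exists
  -- Claim B : e stays ≤ xm^2 after t₀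
  have claimB : ∀ t ∈ Ioo c (c+τ), t₀ ≤ t → e t ≤ xm^2 := by
    intro t ht htt
    by_contra hgt
    push_neg at hgt
    have hbig : xp^2 ≤ e t := (claimA t ht).resolve_left (by linarith)
    have hIcc : Icc t₀ t ⊆ Ioo c (c+τ) := fun r hr => ⟨lt_of_lt_of_le ht₀I.1 hr.1,
      lt_of_le_of_lt hr.2 ht.2⟩
    have hc : ContinuousOn e (Icc t₀ t) := hcont.mono hIcc
    have hmid : (xm^2 + xp^2)/2 ∈ Icc (e t₀) (e t) :=
      ⟨by linarith, by linarith⟩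
    obtain ⟨r, hrIcc, hre⟩ := intermediate_value_Icc htt hc hmid
    rcases claimA r (hIcc hrIcc) with h | h <;> rw [hre] at h <;> linarith
  -- Conclude
  have hfin : ∀ᶠ t in nhdsWithin (c+τ) (Iio (c+τ)), e t ≤ xm^2 := by
    have hmem : Ioo (max c t₀) (c+τ) ∈ nhdsWithin (c+τ) (Iio (c+τ)) :=
      Ioo_mem_nhdsLT_of_mem ⟨max_lt (by linarith) ht₀I.2, le_refl _⟩
    filter_upwards [hmem] with t ht
    exact claimB t ⟨lt_of_le_of_lt (le_max_left _ _) ht.1, ht.2⟩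
      (le_of_lt (lt_of_le_of_lt (le_max_right _ _) ht.1))
  have hnn : ∀ᶠ t in nhdsWithin (c+τ) (Iio (c+τ)), (0:ℝ) ≤ e t := by
    have hmem : Ioo c (c+τ) ∈ nhdsWithin (c+τ) (Iio (c+τ)) :=
      Ioo_mem_nhdsLT_of_mem ⟨by linarith, le_refl _⟩
    filter_upwards [hmem] with t ht using hnonneg t ht
  have hcob : IsCoboundedUnder (· ≤ ·) (nhdsWithin (c+τ) (Iio (c+τ))) e :=
    isCoboundedUnder_le_of_eventually_le _ hnn
  calc limsup e (nhdsWithin (c+τ) (Iio (c+τ))) ≤ xm^2 := limsup_le_of_le hcob hfin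
    _ < 16*α^2 := hMlt
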